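/- The real zero set of the kernel is exactly the image of the parametrization: {(x,y) ∈ ℝ² : γ(x,y) = 0} = {(x̃(t), ỹ(t)) : t ∈ [0, 2π)}. Moreover the map t ↦ (x̃(t), ỹ(t)) is injective on [0, 2π). -/

import Mathlib

open Real

set_option maxHeartbeats 4000000
theorem stmt8
    (σ11 σ12 σ22 μ1 μ2 : ℝ)
    (hσ11 : 0 < σ11) (hσ22 : 0 < σ22)
    (hdet : 0 < σ11 * σ22 - σ12 ^ 2)
    (hμ1 : 0 < μ1) (hμ2 : 0 < μ2)
    (γ : ℝ → ℝ → ℝ)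
    (hγ : ∀ x y, γ x y =
      (1 / 2) * (σ11 * x ^ 2 + 2 * σ12 * x * y + σ22 * y ^ 2) + μ1 * x + μ2 * y)
    (detS D1 D2 xmin xmax ymin ymax β : ℝ)
    (hdetS : detS = σ11 * σ22 - σ12 ^ 2)
    (hD1 : D1 = (μ2 * σ12 - μ1 * σ22) ^ 2 + μ2 ^ 2 * detS)
    (hxmin : xmin = (μ2 * σ12 - μ1 * σ22 - Real.sqrt D1) / detS)
    (hxmax : xmax = (μ2 * σ12 - μ1 * σ22 + Real.sqrt D1) / detS)
    (hD2 : D2 = (μ1 * σ12 - μ2 * σ11) ^ 2 + μ1 ^ 2 * detS)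
    (hymin : ymin = (μ1 * σ12 - μ2 * σ11 - Real.sqrt D2) / detS)
    (hymax : ymax = (μ1 * σ12 - μ2 * σ11 + Real.sqrt D2) / detS)
    (hβ : β = Real.arccos (-σ12 / Real.sqrt (σ11 * σ22)))
    (xt yt : ℝ → ℝ)
    (hxt : ∀ t, xt t = (xmax + xmin) / 2 + ((xmax - xmin) / 2) * Real.cos t)
    (hyt : ∀ t, yt t = (ymax + ymin) / 2 + ((ymax - ymin) / 2) * Real.cos (t - β)) :
    {p : ℝ × ℝ | γ p.1 p.2 = 0} = (fun t => (xt t, yt t)) '' Set.Ico 0 (2 * Real.pi) ∧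
    Set.InjOn (fun t => (xt t, yt t)) (Set.Ico 0 (2 * Real.pi)) := by
  subst hdetS
  have hene : σ11 * σ22 - σ12 ^ 2 ≠ 0 := hdet.ne'
  have hσ22N : 0 < σ22 * (σ22 * μ1 ^ 2 - 2 * σ12 * μ1 * μ2 + σ11 * μ2 ^ 2) := by
    nlinarith [sq_nonneg (σ22 * μ1 - σ12 * μ2), mul_pos (pow_pos hμ2 2) hdet]
  have hN : 0 < σ22 * μ1 ^ 2 - 2 * σ12 * μ1 * μ2 + σ11 * μ2 ^ 2 := by
    rcases mul_pos_iff.1 hσ22N with ⟨_, h⟩ | ⟨h, _⟩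
    · exact h
    · linarith
  have hD1' : D1 = σ22 * (σ22 * μ1 ^ 2 - 2 * σ12 * μ1 * μ2 + σ11 * μ2 ^ 2) := by
    rw [hD1]; ring
  have hD2' : D2 = σ11 * (σ22 * μ1 ^ 2 - 2 * σ12 * μ1 * μ2 + σ11 * μ2 ^ 2) := by
    rw [hD2]; ring
  have hD1nn : 0 ≤ D1 := by rw [hD1']; positivity
  have hD2nn : 0 ≤ D2 := by rw [hD2']; positivity
  set A := Real.sqrt D1 with hAdef
  set B := Real.sqrt D2 with hBdef
  set d := Real.sqrt (σ11 * σ22 - σ12 ^ 2) with hddef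
  set s := Real.sqrt (σ11 * σ22) with hsdef
  have hA2 : A ^ 2 = σ22 * (σ22 * μ1 ^ 2 - 2 * σ12 * μ1 * μ2 + σ11 * μ2 ^ 2) := by
    rw [hAdef, Real.sq_sqrt hD1nn, hD1']
  have hApos : 0 < A := Real.sqrt_pos.mpr (by rw [hD1']; positivity)
  have hd2 : d ^ 2 = σ11 * σ22 - σ12 ^ 2 := Real.sq_sqrt hdet.le
  have hdpos : 0 < d := Real.sqrt_pos.mpr hdet
  have hs2 : s ^ 2 = σ11 * σ22 := Real.sq_sqrt (by positivity)
  have hspos : 0 < s := Real.sqrt_pos.mpr (by positivity)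
  have hBs : B * σ22 = A * s := by
    have h1 : B * σ22 = Real.sqrt (D2 * σ22 ^ 2) := by
      rw [Real.sqrt_mul hD2nn, Real.sqrt_sq hσ22.le]
    have h2 : A * s = Real.sqrt (D1 * (σ11 * σ22)) := by
      rw [Real.sqrt_mul hD1nn]
    rw [h1, h2]; congr 1; rw [hD1', hD2']; ring
  have hs12 : σ12 ^ 2 < s ^ 2 := by rw [hs2]; linarith
  have hb1 : σ12 / s ≤ 1 := by
    rw [div_le_one hspos]; nlinarith [sq_nonneg (s - σ12), sq_nonneg (s + σ12)]
  have hb2 : -1 ≤ σ12 / s := by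
    rw [le_div_iff₀ hspos]; nlinarith [sq_nonneg (s - σ12), sq_nonneg (s + σ12)]
  have hcb : Real.cos β = -σ12 / s := by
    rw [hβ, neg_div]
    exact Real.cos_arccos (by linarith) (by linarith)
  have hsb : Real.sin β = d / s := by
    rw [hβ, Real.sin_arccos]
    rw [show 1 - (-σ12 / Real.sqrt (σ11 * σ22)) ^ 2 = (d / s) ^ 2 by
      rw [← hsdef]; field_simp; linear_combination hs2 - hd2]
    exact Real.sqrt_sq (by positivity)
  -- key parametrization identities
  have hX : ∀ t, (σ11 * σ22 - σ12 ^ 2) * xt t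
      = (μ2 * σ12 - μ1 * σ22) + A * Real.cos t := by
    intro t
    rw [hxt t, hxmax, hxmin]
    field_simp
    ring
  have hY : ∀ t, ((σ11 * σ22 - σ12 ^ 2) * σ22) * yt t
      = σ22 * (μ1 * σ12 - μ2 * σ11) + A * (-σ12 * Real.cos t + d * Real.sin t) := by
    intro t
    have hY1 : ((σ11 * σ22 - σ12 ^ 2) * σ22 * s) * yt t
        = s * (σ22 * (μ1 * σ12 - μ2 * σ11)) + σ22 * B * (-σ12 * Real.cos t + d * Real.sin t) := by
      rw [hyt t, hymax, hymin, Real.cos_sub, hcb, hsb]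
      field_simp
      ring
    have h3 : s * (((σ11 * σ22 - σ12 ^ 2) * σ22) * yt t)
        = s * (σ22 * (μ1 * σ12 - μ2 * σ11) + A * (-σ12 * Real.cos t + d * Real.sin t)) := by
      linear_combination hY1 + (-σ12 * Real.cos t + d * Real.sin t) * hBs
    exact mul_left_cancel₀ hspos.ne' h3
  -- forward: every point of the parametrization lies in the zero set
  have hzero : ∀ t, γ (xt t) (yt t) = 0 := by
    intro t
    have hS2 : Real.sin t ^ 2 = 1 - Real.cos t ^ 2 := by
      linarith [Real.sin_sq_add_cos_sq t]
    have key : 2 * (σ11 * σ22 - σ12 ^ 2) ^ 2 * σ22 ^ 2 *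
        ((1 / 2) * (σ11 * (xt t) ^ 2 + 2 * σ12 * (xt t) * (yt t) + σ22 * (yt t) ^ 2)
          + μ1 * xt t + μ2 * yt t) = 0 := by
      linear_combination
        (σ11 * σ22 ^ 2 * ((σ11 * σ22 - σ12 ^ 2) * xt t + ((μ2 * σ12 - μ1 * σ22) + A * Real.cos t))
          + 2 * σ12 * σ22 * ((σ11 * σ22 - σ12 ^ 2) * σ22 * yt t)
          + 2 * μ1 * (σ11 * σ22 - σ12 ^ 2) * σ22 ^ 2) * hX t
        + (2 * σ12 * σ22 * ((μ2 * σ12 - μ1 * σ22) + A * Real.cos t)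
          + σ22 * ((σ11 * σ22 - σ12 ^ 2) * σ22 * yt t
            + (σ22 * (μ1 * σ12 - μ2 * σ11) + A * (-σ12 * Real.cos t + d * Real.sin t)))
          + 2 * μ2 * (σ11 * σ22 - σ12 ^ 2) * σ22) * hY t
        + (σ22 * Real.sin t ^ 2 * d ^ 2 - σ12 ^ 2 * σ22 * Real.cos t ^ 2
            + σ11 * σ22 ^ 2 * Real.cos t ^ 2) * hA2
        + ((σ22 ^ 3 * μ1 ^ 2 - 2 * σ12 * σ22 ^ 2 * μ1 * μ2 + σ11 * σ22 ^ 2 * μ2 ^ 2)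
            * Real.sin t ^ 2) * hd2
        + (-(σ12 ^ 2 * σ22 ^ 3 * μ1 ^ 2) + 2 * σ12 ^ 3 * σ22 ^ 2 * μ1 * μ2
            + σ11 * σ22 ^ 4 * μ1 ^ 2 - 2 * σ11 * σ12 * σ22 ^ 3 * μ1 * μ2
            - σ11 * σ12 ^ 2 * σ22 ^ 2 * μ2 ^ 2 + σ11 ^ 2 * σ22 ^ 3 * μ2 ^ 2) * hS2
    have hfac : (2 * (σ11 * σ22 - σ12 ^ 2) ^ 2 * σ22 ^ 2 : ℝ) ≠ 0 := by positivity
    rw [hγ]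
    exact (mul_eq_zero.mp key).resolve_left hfac
  constructor
  · -- set equality
    ext ⟨x, y⟩
    simp only [Set.mem_setOf_eq, Set.mem_image, Set.mem_Ico]
    constructor
    · intro hxy
      rw [hγ] at hxy
      set C : ℝ := ((σ11 * σ22 - σ12 ^ 2) * x - (μ2 * σ12 - μ1 * σ22)) / A with hCdef
      set S : ℝ := (σ22 * ((σ11 * σ22 - σ12 ^ 2) * y - (μ1 * σ12 - μ2 * σ11))
          + σ12 * ((σ11 * σ22 - σ12 ^ 2) * x - (μ2 * σ12 - μ1 * σ22))) / (A * d) with hSdef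
      have hAC : A * C = (σ11 * σ22 - σ12 ^ 2) * x - (μ2 * σ12 - μ1 * σ22) := by
        rw [hCdef]; field_simp
      have hAdS : (A * d) * S = σ22 * ((σ11 * σ22 - σ12 ^ 2) * y - (μ1 * σ12 - μ2 * σ11))
          + σ12 * ((σ11 * σ22 - σ12 ^ 2) * x - (μ2 * σ12 - μ1 * σ22)) := by
        rw [hSdef]; field_simp
      have key : (A * C) ^ 2 * d ^ 2 + ((A * d) * S) ^ 2 = A ^ 2 * d ^ 2 := by
        rw [hAC, hAdS]
        linear_combination (2 * (σ11 * σ22 - σ12 ^ 2) ^ 2 * σ22) * hxy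
          + (((σ11 * σ22 - σ12 ^ 2) * x - (μ2 * σ12 - μ1 * σ22)) ^ 2
            - σ22 * (σ22 * μ1 ^ 2 - 2 * σ12 * μ1 * μ2 + σ11 * μ2 ^ 2)) * hd2
          - d ^ 2 * hA2
      have hCS : C ^ 2 + S ^ 2 = 1 := by
        have hne : ((A * d) ^ 2 : ℝ) ≠ 0 := by positivity
        have key2 : (A * d) ^ 2 * (C ^ 2 + S ^ 2) = (A * d) ^ 2 * 1 := by
          linear_combination key
        exact mul_left_cancel₀ hne key2
      set z : ℂ := (C : ℂ) + (S : ℂ) * Complex.I with hzdef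
      have hzre : z.re = C := by simp [hzdef]
      have hzim : z.im = S := by simp [hzdef]
      have habs : ‖z‖ = 1 := by
        rw [Complex.norm_def, Complex.normSq_apply, hzre, hzim]
        rw [show C * C + S * S = 1 by linear_combination hCS]
        exact Real.sqrt_one
      have hz0 : z ≠ 0 := by
        intro h; rw [h] at habs; simp at habs
      have hcost0 : Real.cos (Complex.arg z) = C := by
        rw [Complex.cos_arg hz0, habs, hzre, div_one]
      have hsint0 : Real.sin (Complex.arg z) = S := by
        rw [Complex.sin_arg, habs, hzim, div_one]
      have main : ∀ t, Real.cos t = C → Real.sin t = S → (xt t, yt t) = (x, y) := by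
        intro t hc hs
        have h1 : (σ11 * σ22 - σ12 ^ 2) * xt t = (σ11 * σ22 - σ12 ^ 2) * x := by
          have h := hX t
          rw [hc] at h
          linear_combination h + hAC
        have h2 : ((σ11 * σ22 - σ12 ^ 2) * σ22) * yt t
            = ((σ11 * σ22 - σ12 ^ 2) * σ22) * y := by
          have h := hY t
          rw [hc, hs] at h
          linear_combination h - σ12 * hAC + hAdS
        have hxe : xt t = x := mul_left_cancel₀ hene h1
        have hye : yt t = y := mul_left_cancel₀ (by positivity) h2
        rw [hxe, hye]
      have hpi := Real.pi_pos
      rcases le_or_gt 0 (Complex.arg z) with h0 | h0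
      · exact ⟨Complex.arg z, ⟨h0, lt_of_le_of_lt (Complex.arg_le_pi z) (by linarith)⟩,
          main _ hcost0 hsint0⟩
      · refine ⟨Complex.arg z + 2 * Real.pi,
          ⟨by linarith [Complex.neg_pi_lt_arg z], by linarith [Complex.arg_le_pi z]⟩, ?_⟩
        exact main _ (by rw [Real.cos_add_two_pi]; exact hcost0)
          (by rw [Real.sin_add_two_pi]; exact hsint0)
    · rintro ⟨t, ht, heq⟩
      simp only [Prod.mk.injEq] at heq
      obtain ⟨rfl, rfl⟩ := heq
      exact hzero t
  · -- injectivity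
    intro t1 ht1 t2 ht2 heq
    simp only [Prod.mk.injEq] at heq
    obtain ⟨hx12, hy12⟩ := heq
    have hc : Real.cos t1 = Real.cos t2 := by
      have h1 := hX t1
      have h2 := hX t2
      rw [hx12] at h1
      have h3 : A * Real.cos t1 = A * Real.cos t2 := by linarith
      exact mul_left_cancel₀ hApos.ne' h3
    have hs : Real.sin t1 = Real.sin t2 := by
      have h1 := hY t1
      have h2 := hY t2
      rw [hy12] at h1
      have h3 : (A * d) * Real.sin t1 = (A * d) * Real.sin t2 := by
        rw [hc] at h1
        linear_combination h2 - h1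
      exact mul_left_cancel₀ (by positivity) h3
    have hexp : Complex.exp (t1 * Complex.I) = Complex.exp (t2 * Complex.I) := by
      rw [Complex.exp_mul_I, Complex.exp_mul_I, ← Complex.ofReal_cos, ← Complex.ofReal_sin,
        ← Complex.ofReal_cos, ← Complex.ofReal_sin, hc, hs]
    obtain ⟨n, hn⟩ := Complex.exp_eq_exp_iff_exists_int.mp hexp
    have him : t1 = t2 + n * (2 * Real.pi) := by
      have h := congrArg Complex.im hn
      simpa using h
    have hpi := Real.pi_pos
    obtain ⟨h1a, h1b⟩ := ht1
    obtain ⟨h2a, h2b⟩ := ht2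
    have hn0 : n = 0 := by
      by_contra h
      rcases lt_or_gt_of_ne h with hlt | hgt
      · have h1' : n ≤ -1 := by omega
        have h1 : (n : ℝ) ≤ -1 := by exact_mod_cast h1'
        have h2 : (n : ℝ) * (2 * Real.pi) ≤ (-1) * (2 * Real.pi) :=
          mul_le_mul_of_nonneg_right h1 (by linarith)
        linarith
      · have h1 : (1 : ℝ) ≤ (n : ℝ) := by exact_mod_cast hgt
        have h2 : (1 : ℝ) * (2 * Real.pi) ≤ (n : ℝ) * (2 * Real.pi) :=
          mul_le_mul_of_nonneg_right h1 (by linarith)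
        linarith
    rw [hn0] at him
    simpa using him
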